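/- Global asymptotic stability of the leaky-integrator ESN: let γ ∈ (0, 1], let W^res be an N×N real matrix with ℓ²-operator norm ‖W^res‖ₒₚ < 1, let W^in be an N×D real matrix, and let u : ℕ → ℝ^D be any input sequence. If x, x̃ : ℕ → ℝ^N both satisfy x(t+1) = (1 − γ) x(t) + γ tanh.(W^res x(t) + W^in u(t+1)) for all t ∈ ℕ, then for all t, ‖x(t) − x̃(t)‖₂ ≤ ((1 − γ) + γ ‖W^res‖ₒₚ)^t · ‖x(0) − x̃(0)‖₂, and hence ‖x(t) − x̃(t)‖₂ → 0 as t → ∞. -/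

import Mathlib

open Filter Topology

/-- Componentwise hyperbolic tangent on Euclidean space. -/
noncomputable def tanhVec {n : ℕ} (v : EuclideanSpace ℝ (Fin n)) : EuclideanSpace ℝ (Fin n) :=
  WithLp.toLp 2 (fun i => Real.tanh (v i))

/-- The action `x ↦ W x` of a matrix on Euclidean space (equal to `Matrix.mulVec`). -/
noncomputable def mulVecE {m n : ℕ} (W : Matrix (Fin m) (Fin n) ℝ)
    (x : EuclideanSpace ℝ (Fin n)) : EuclideanSpace ℝ (Fin m) :=
  Matrix.toEuclideanLin W x

/-- The ℓ²-operator norm of a matrix (its largest singular value). -/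
noncomputable def opNorm {m n : ℕ} (W : Matrix (Fin m) (Fin n) ℝ) : ℝ :=
  ‖LinearMap.toContinuousLinearMap (Matrix.toEuclideanLin W)‖


lemma tanh_hasDerivAt (x : ℝ) : HasDerivAt Real.tanh (1 / Real.cosh x ^ 2) x := by
  have h : HasDerivAt (fun x => Real.sinh x / Real.cosh x)
      ((Real.cosh x * Real.cosh x - Real.sinh x * Real.sinh x) / Real.cosh x ^ 2) x :=
    (Real.hasDerivAt_sinh x).div (Real.hasDerivAt_cosh x) (Real.cosh_pos x).ne'
  have e1 : Real.cosh x * Real.cosh x - Real.sinh x * Real.sinh x = 1 := by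
    nlinarith [Real.cosh_sq_sub_sinh_sq x]
  have e : Real.tanh = fun x => Real.sinh x / Real.cosh x := funext Real.tanh_eq_sinh_div_cosh
  rw [e]; simpa [e1] using h

lemma tanh_lipschitz : LipschitzWith 1 Real.tanh := by
  have hb : ∀ x : ℝ, ‖deriv Real.tanh x‖₊ ≤ 1 := by
    intro x
    have hd : deriv Real.tanh x = 1 / Real.cosh x ^ 2 := (tanh_hasDerivAt x).deriv
    have h1 : (1:ℝ) ≤ Real.cosh x := Real.one_le_cosh x
    have : ‖deriv Real.tanh x‖ ≤ 1 := by
      rw [hd, Real.norm_eq_abs, abs_of_nonneg (by positivity), div_le_one (by positivity)]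
      nlinarith
    rw [← NNReal.coe_le_coe]; simpa using this
  exact lipschitzWith_of_nnnorm_deriv_le (fun x => (tanh_hasDerivAt x).differentiableAt) hb

lemma tanhVec_lipschitz {n : ℕ} (a b : EuclideanSpace ℝ (Fin n)) :
    ‖tanhVec a - tanhVec b‖ ≤ ‖a - b‖ := by
  rw [← dist_eq_norm, ← dist_eq_norm, EuclideanSpace.dist_eq, EuclideanSpace.dist_eq]
  apply Real.sqrt_le_sqrt
  apply Finset.sum_le_sum
  intro i _
  have := tanh_lipschitz.dist_le_mul (a i) (b i)
  simp only [NNReal.coe_one, one_mul] at this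
  have hnn : (0:ℝ) ≤ dist (a i) (b i) := dist_nonneg
  show dist (Real.tanh (a i)) (Real.tanh (b i)) ^ 2 ≤ _
  exact pow_le_pow_left₀ dist_nonneg this 2

lemma mulVecE_le {m n : ℕ} (W : Matrix (Fin m) (Fin n) ℝ) (v : EuclideanSpace ℝ (Fin n)) :
    ‖mulVecE W v‖ ≤ opNorm W * ‖v‖ :=
  (LinearMap.toContinuousLinearMap (Matrix.toEuclideanLin W)).le_opNorm v


/-- Global asymptotic stability of the leaky-integrator ESN. -/
theorem leaky_esn_stability (N D : ℕ) (γ : ℝ) (hγ0 : 0 < γ) (hγ1 : γ ≤ 1)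
    (Wres : Matrix (Fin N) (Fin N) ℝ) (Win : Matrix (Fin N) (Fin D) ℝ)
    (hW : opNorm Wres < 1)
    (u : ℕ → EuclideanSpace ℝ (Fin D))
    (x x' : ℕ → EuclideanSpace ℝ (Fin N))
    (hx : ∀ t, x (t + 1) =
      (1 - γ) • x t + γ • tanhVec (mulVecE Wres (x t) + mulVecE Win (u (t + 1))))
    (hx' : ∀ t, x' (t + 1) =
      (1 - γ) • x' t + γ • tanhVec (mulVecE Wres (x' t) + mulVecE Win (u (t + 1)))) :
    (∀ t : ℕ, ‖x t - x' t‖ ≤ ((1 - γ) + γ * opNorm Wres) ^ t * ‖x 0 - x' 0‖) ∧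
    Tendsto (fun t : ℕ => ‖x t - x' t‖) atTop (𝓝 0) := by
  set c : ℝ := (1 - γ) + γ * opNorm Wres with hc
  have hop : 0 ≤ opNorm Wres := norm_nonneg _
  have hc0 : 0 ≤ c := by nlinarith
  have hc1 : c < 1 := by nlinarith
  have step : ∀ t, ‖x (t + 1) - x' (t + 1)‖ ≤ c * ‖x t - x' t‖ := by
    intro t
    rw [hx t, hx' t]
    set a := mulVecE Wres (x t) + mulVecE Win (u (t + 1))
    set b := mulVecE Wres (x' t) + mulVecE Win (u (t + 1))
    have key : (1 - γ) • x t + γ • tanhVec a - ((1 - γ) • x' t + γ • tanhVec b)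
        = (1 - γ) • (x t - x' t) + γ • (tanhVec a - tanhVec b) := by
      simp [smul_sub]; abel
    rw [key]
    calc ‖(1 - γ) • (x t - x' t) + γ • (tanhVec a - tanhVec b)‖
        ≤ ‖(1 - γ) • (x t - x' t)‖ + ‖γ • (tanhVec a - tanhVec b)‖ := norm_add_le _ _
      _ = (1 - γ) * ‖x t - x' t‖ + γ * ‖tanhVec a - tanhVec b‖ := by
          rw [norm_smul, norm_smul, Real.norm_eq_abs, Real.norm_eq_abs,
            abs_of_nonneg (by linarith), abs_of_nonneg hγ0.le]
      _ ≤ (1 - γ) * ‖x t - x' t‖ + γ * (opNorm Wres * ‖x t - x' t‖) := by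
          have h1 : ‖tanhVec a - tanhVec b‖ ≤ ‖a - b‖ := tanhVec_lipschitz a b
          have h2 : a - b = mulVecE Wres (x t - x' t) := by
            simp only [a, b, mulVecE, map_sub]; abel
          have h3 : ‖a - b‖ ≤ opNorm Wres * ‖x t - x' t‖ := h2 ▸ mulVecE_le _ _
          nlinarith [h1.trans h3]
      _ = c * ‖x t - x' t‖ := by ring
  have bound : ∀ t : ℕ, ‖x t - x' t‖ ≤ c ^ t * ‖x 0 - x' 0‖ := by
    intro t
    induction t with
    | zero => simp
    | succ n ih =>
      calc ‖x (n + 1) - x' (n + 1)‖ ≤ c * ‖x n - x' n‖ := step n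
        _ ≤ c * (c ^ n * ‖x 0 - x' 0‖) := by nlinarith [norm_nonneg (x n - x' n)]
        _ = c ^ (n + 1) * ‖x 0 - x' 0‖ := by ring
  refine ⟨bound, ?_⟩
  have hgeo : Tendsto (fun t : ℕ => c ^ t * ‖x 0 - x' 0‖) atTop (𝓝 0) := by
    have := (tendsto_pow_atTop_nhds_zero_of_lt_one hc0 hc1).mul_const ‖x 0 - x' 0‖
    simpa using this
  exact squeeze_zero (fun t => norm_nonneg _) bound hgeo
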